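/- Let m, n ∈ ℕ with n ≥ 1, let q_0, …, q_n be pairwise distinct real numbers, and let A ⊆ {0, …, n}^m be a nonempty downward closed set of multi-indices. Then there exists a unique family of polynomials (L_α)_{α ∈ A} with each L_α ∈ Π_A = span{x ↦ x_1^{α_1}⋯x_m^{α_m} : α ∈ A} satisfying the Kronecker property L_α(p_γ) = δ_{α,γ} for all α, γ ∈ A, where p_γ = (q_{γ_1}, …, q_{γ_m}). -/
import Mathlib


/-- The monomial `x ↦ x^α = x_1^{α_1} ⋯ x_m^{α_m}` for a multi-index `α ∈ {0,…,n}^m`. -/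
def monomial (m n : ℕ) (α : Fin m → Fin (n + 1)) : (Fin m → ℝ) → ℝ :=
  fun x => ∏ i, x i ^ (α i : ℕ)

/-- The polynomial space `Π_A`, the span of the monomials with multi-indices in `A`. -/
def polySpace (m n : ℕ) (A : Finset (Fin m → Fin (n + 1))) :
    Submodule ℝ ((Fin m → ℝ) → ℝ) :=
  Submodule.span ℝ (monomial m n '' (A : Set (Fin m → Fin (n + 1))))

/-- The grid node `p_α = (q_{α_1}, …, q_{α_m})`. -/
def gridNode (m n : ℕ) (q : Fin (n + 1) → ℝ) (α : Fin m → Fin (n + 1)) : Fin m → ℝ :=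
  fun i => q (α i)

open Finset Polynomial Module

/-- The Newton-type basis function `x ↦ ∏_i ∏_{j < α_i} (x_i - q_j)`. -/
noncomputable def newton (m n : ℕ) (q : Fin (n + 1) → ℝ) (α : Fin m → Fin (n + 1)) :
    (Fin m → ℝ) → ℝ :=
  fun x => ∏ i, ∏ j ∈ Finset.univ.filter (fun j : Fin (n + 1) => (j : ℕ) < (α i : ℕ)),
    (x i - q j)

lemma newton_grid_eq_zero {m n : ℕ} (q : Fin (n + 1) → ℝ) (α γ : Fin m → Fin (n + 1))
    (i : Fin m) (h : (γ i : ℕ) < (α i : ℕ)) :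
    newton m n q α (gridNode m n q γ) = 0 := by
  unfold newton gridNode
  apply Finset.prod_eq_zero (Finset.mem_univ i)
  apply Finset.prod_eq_zero (i := γ i)
  · simp only [Finset.mem_filter, Finset.mem_univ, true_and]
    exact h
  · simp

lemma newton_grid_ne_zero {m n : ℕ} {q : Fin (n + 1) → ℝ} (hq : Function.Injective q)
    (α γ : Fin m → Fin (n + 1)) (h : ∀ i, (α i : ℕ) ≤ (γ i : ℕ)) :
    newton m n q α (gridNode m n q γ) ≠ 0 := by
  unfold newton gridNode
  refine Finset.prod_ne_zero_iff.2 fun i _ => Finset.prod_ne_zero_iff.2 fun j hj => ?_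
  simp only [Finset.mem_filter, Finset.mem_univ, true_and] at hj
  have hne : j ≠ γ i := by
    have := h i
    exact Fin.ne_of_val_ne (by omega)
  exact sub_ne_zero.2 fun hqe => hne (hq hqe.symm)

lemma newton_mem {m n : ℕ} (q : Fin (n + 1) → ℝ) (A : Finset (Fin m → Fin (n + 1)))
    (hdc : ∀ α ∈ A, ∀ β : Fin m → Fin (n + 1), (∀ i, (β i : ℕ) ≤ (α i : ℕ)) → β ∈ A)
    (α : Fin m → Fin (n + 1)) (hα : α ∈ A) :
    newton m n q α ∈ polySpace m n A := by
  classical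
  set P : Fin m → Polynomial ℝ :=
    fun i => ∏ j ∈ Finset.univ.filter (fun j : Fin (n + 1) => (j : ℕ) < (α i : ℕ)),
      (X - C (q j)) with hP
  have hdeg : ∀ i, (P i).natDegree < (α i : ℕ) + 1 := by
    intro i
    have h1 : (P i).natDegree ≤
        ∑ j ∈ Finset.univ.filter (fun j : Fin (n + 1) => (j : ℕ) < (α i : ℕ)),
          (X - C (q j)).natDegree := natDegree_prod_le _ _
    have h2 : ∀ j : Fin (n + 1), (X - C (q j)).natDegree = 1 := fun j => natDegree_X_sub_C _
    have hcard : (Finset.univ.filter (fun j : Fin (n + 1) => (j : ℕ) < (α i : ℕ))).card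
        ≤ (α i : ℕ) := by
      set T := Finset.univ.filter (fun j : Fin (n + 1) => (j : ℕ) < (α i : ℕ)) with hT
      have hsub : T.image Fin.val ⊆ Finset.range (α i : ℕ) := by
        intro k hk
        simp only [hT, Finset.mem_image, Finset.mem_filter, Finset.mem_univ, true_and] at hk
        obtain ⟨j, hj, rfl⟩ := hk
        simpa using hj
      calc T.card = (T.image Fin.val).card :=
            (Finset.card_image_of_injective _ Fin.val_injective).symm
        _ ≤ (Finset.range (α i : ℕ)).card := Finset.card_le_card hsub
        _ = (α i : ℕ) := Finset.card_range _
    simp only [h2, Finset.sum_const, smul_eq_mul, mul_one] at h1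
    omega
  have key : newton m n q α = fun x : Fin m → ℝ =>
      ∏ i, ∑ k ∈ Finset.range ((α i : ℕ) + 1), (P i).coeff k * (x i) ^ k := by
    funext x
    unfold newton
    refine Finset.prod_congr rfl fun i _ => ?_
    rw [← Polynomial.eval_eq_sum_range' (hdeg i)]
    simp [hP, Polynomial.eval_prod]
  have key2 : newton m n q α =
      ∑ g ∈ Fintype.piFinset (fun i => Finset.range ((α i : ℕ) + 1)),
        (∏ i, (P i).coeff (g i)) •
          _root_.monomial m n (fun i => ⟨min (g i) n, by omega⟩) := by
    rw [key]
    funext x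
    rw [Finset.prod_univ_sum, Finset.sum_apply]
    refine Finset.sum_congr rfl fun g hg => ?_
    rw [Finset.prod_mul_distrib]
    simp only [Pi.smul_apply, smul_eq_mul]
    congr 1
    unfold _root_.monomial
    refine Finset.prod_congr rfl fun i _ => ?_
    have hgi : g i ≤ (α i : ℕ) := by
      have := Fintype.mem_piFinset.1 hg i
      simpa [Nat.lt_succ_iff] using this
    have : min (g i) n = g i := min_eq_left (hgi.trans (Nat.lt_succ_iff.1 (α i).isLt))
    simp [this]
  rw [key2]
  apply Submodule.sum_mem
  intro g hg
  apply Submodule.smul_mem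
  apply Submodule.subset_span
  refine ⟨fun i => ⟨min (g i) n, by omega⟩, ?_, rfl⟩
  simp only [Finset.mem_coe]
  refine hdc α hα _ fun i => ?_
  have hgi : g i ≤ (α i : ℕ) := by
    have := Fintype.mem_piFinset.1 hg i
    simpa [Nat.lt_succ_iff] using this
  simpa using (min_le_left (g i) n).trans hgi

/-- The evaluation map from `Π_A` to `ℝ^A`. -/
def evalMap (m n : ℕ) (q : Fin (n + 1) → ℝ) (A : Finset (Fin m → Fin (n + 1))) :
    polySpace m n A →ₗ[ℝ] ({α // α ∈ A} → ℝ) where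
  toFun f := fun γ => (f : (Fin m → ℝ) → ℝ) (gridNode m n q γ.1)
  map_add' f g := rfl
  map_smul' c f := rfl

theorem exists_unique_lagrange_basis (m n : ℕ) (hn : 1 ≤ n)
    (q : Fin (n + 1) → ℝ) (hq : Function.Injective q)
    (A : Finset (Fin m → Fin (n + 1))) (hA : A.Nonempty)
    (hdc : ∀ α ∈ A, ∀ β : Fin m → Fin (n + 1), (∀ i, (β i : ℕ) ≤ (α i : ℕ)) → β ∈ A) :
    ∃! L : {α // α ∈ A} → ((Fin m → ℝ) → ℝ),
      (∀ α : {α // α ∈ A}, L α ∈ polySpace m n A) ∧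
      ∀ α γ : {α // α ∈ A},
        L α (gridNode m n q (γ : Fin m → Fin (n + 1))) = if α = γ then (1 : ℝ) else 0 := by
  classical
  set E := evalMap m n q A with hE
  set v : {α // α ∈ A} → ({α // α ∈ A} → ℝ) :=
    fun α => E ⟨newton m n q α.1, newton_mem q A hdc α.1 α.2⟩ with hv
  have hvind : LinearIndependent ℝ v := by
    rw [Fintype.linearIndependent_iff]
    intro c hc
    by_contra hne
    push_neg at hne
    obtain ⟨α₁, hα₁⟩ := hne
    have hS : (Finset.univ.filter fun α : {α // α ∈ A} => c α ≠ 0).Nonempty :=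
      ⟨α₁, by simp [hα₁]⟩
    obtain ⟨α₀, hα₀S, hmin⟩ :=
      Finset.exists_min_image _ (fun α : {α // α ∈ A} => ∑ i, (α.1 i : ℕ)) hS
    simp only [Finset.mem_filter, Finset.mem_univ, true_and] at hα₀S
    have hc0 := congrFun hc α₀
    rw [Finset.sum_apply] at hc0
    have hzero : ∀ b ∈ Finset.univ, b ≠ α₀ → (c b • v b) α₀ = 0 := by
      intro b _ hbne
      by_cases hcb : c b = 0
      · simp [hcb]
      · have hble := hmin b (by simp [hcb])
        have hex : ∃ i, (α₀.1 i : ℕ) < (b.1 i : ℕ) := by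
          by_contra hno
          push_neg at hno
          have hsum : ∑ i, (b.1 i : ℕ) ≤ ∑ i, (α₀.1 i : ℕ) := Finset.sum_le_sum fun i _ => hno i
          have heq : ∑ i, (b.1 i : ℕ) = ∑ i, (α₀.1 i : ℕ) := le_antisymm hsum hble
          have : ∀ i, (b.1 i : ℕ) = (α₀.1 i : ℕ) := by
            intro i
            by_contra hne2
            have hlt : (b.1 i : ℕ) < (α₀.1 i : ℕ) := lt_of_le_of_ne (hno i) hne2
            have : ∑ i, (b.1 i : ℕ) < ∑ i, (α₀.1 i : ℕ) :=
              Finset.sum_lt_sum (fun i _ => hno i) ⟨i, Finset.mem_univ i, hlt⟩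
            omega
          exact hbne (Subtype.ext (funext fun i => Fin.ext (this i)))
        obtain ⟨i, hi⟩ := hex
        have : v b α₀ = 0 := newton_grid_eq_zero q b.1 α₀.1 i hi
        simp [this]
    rw [Finset.sum_eq_single α₀ hzero (by simp)] at hc0
    have hvd : v α₀ α₀ ≠ 0 := newton_grid_ne_zero hq α₀.1 α₀.1 fun i => le_refl _
    simp only [Pi.smul_apply, smul_eq_mul] at hc0
    exact hα₀S (by rcases mul_eq_zero.1 hc0 with h | h; exact h; exact absurd h hvd)
  have hcard : Fintype.card {α // α ∈ A} = A.card := Fintype.card_coe A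
  have hfr : finrank ℝ ({α // α ∈ A} → ℝ) = A.card := by
    rw [Module.finrank_pi, hcard]
  have : Nonempty {α // α ∈ A} := ⟨⟨hA.choose, hA.choose_spec⟩⟩
  have hspan : Submodule.span ℝ (Set.range v) = ⊤ :=
    hvind.span_eq_top_of_card_eq_finrank (by rw [hcard, hfr])
  have hsurj : Function.Surjective E := by
    rw [← LinearMap.range_eq_top, ← top_le_iff, ← hspan, Submodule.span_le]
    rintro _ ⟨α, rfl⟩
    exact ⟨_, rfl⟩
  have hfd : FiniteDimensional ℝ (polySpace m n A) := by
    unfold polySpace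
    exact FiniteDimensional.span_of_finite ℝ ((A.finite_toSet).image _)
  have hle : finrank ℝ (polySpace m n A) ≤ A.card := by
    have hps : polySpace m n A =
        Submodule.span ℝ ((A.image (monomial m n) : Finset _) : Set _) := by
      unfold polySpace
      rw [Finset.coe_image]
    rw [hps]
    exact (finrank_span_finset_le_card _).trans Finset.card_image_le
  have hge : A.card ≤ finrank ℝ (polySpace m n A) := by
    have h1 := LinearMap.finrank_range_le E
    rw [LinearMap.range_eq_top.2 hsurj, finrank_top, hfr] at h1
    exact h1
  have heq : finrank ℝ (polySpace m n A) = finrank ℝ ({α // α ∈ A} → ℝ) := by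
    rw [hfr]; omega
  have hinj : Function.Injective E :=
    (LinearMap.injective_iff_surjective_of_finrank_eq_finrank heq).2 hsurj
  let e : polySpace m n A ≃ₗ[ℝ] ({α // α ∈ A} → ℝ) := LinearEquiv.ofBijective E ⟨hinj, hsurj⟩
  refine ⟨fun α => ((e.symm (Pi.single α 1) : polySpace m n A) : (Fin m → ℝ) → ℝ),
    ⟨fun α => (e.symm (Pi.single α 1)).2, ?_⟩, ?_⟩
  · intro α γ
    have h2 := congrFun (e.apply_symm_apply (Pi.single α 1)) γ
    have h3 : (Pi.single α (1 : ℝ) : {α // α ∈ A} → ℝ) γ = if α = γ then (1 : ℝ) else 0 := by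
      rw [Pi.single_apply]; simp [eq_comm]
    exact h2.trans h3
  · rintro L' ⟨h1, h2⟩
    funext α
    have hEq : E ⟨L' α, h1 α⟩ = Pi.single α 1 := by
      funext γ
      have h3 : (Pi.single α (1 : ℝ) : {α // α ∈ A} → ℝ) γ = if α = γ then (1 : ℝ) else 0 := by
        rw [Pi.single_apply]; simp [eq_comm]
      exact (h2 α γ).trans h3.symm
    have hmem : (⟨L' α, h1 α⟩ : polySpace m n A) = e.symm (Pi.single α 1) := by
      apply hinj
      rw [hEq]
      exact (e.apply_symm_apply _).symm
    exact congrArg Subtype.val hmem
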